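/- arXiv:1602.09001 — 2 statements merged into one kernel-verified Lean document; each statement's English description precedes it below -/
import Mathlib

section
/- Let (V_1, V_2, A) be finitely valued random variables such that the joint pmf of (V_1, V_2) has full support on 𝒱_1 × 𝒱_2, A is conditionally independent of V_2 given V_1, and A is conditionally independent of V_1 given V_2. Then A is independent of the pair (V_1, V_2), i.e., I(V_1, V_2 ; A) = 0. -/
open scoped BigOperators

noncomputable section

namespace SC

/-! ### Finite probability mass functions and information measures (base 2) -/

/-- `p` is a probability mass function on a finite type. -/
def IsPMF {α : Type*} [Fintype α] (p : α → ℝ) : Prop :=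
  (∀ a, 0 ≤ p a) ∧ ∑ a, p a = 1

/-- Distribution (pushforward pmf) of the random variable `f` under the pmf `p`. -/
def distOf {α β : Type*} [Fintype α] [DecidableEq β] (p : α → ℝ) (f : α → β) : β → ℝ :=
  fun b => ∑ a, if f a = b then p a else 0

/-- ℓ₁ (total variational) distance between two pmfs. -/
def l1dist {α : Type*} [Fintype α] (p q : α → ℝ) : ℝ := ∑ a, |p a - q a|

/-- Kullback–Leibler divergence (base 2), with the usual `0 log 0 = 0` conventions. -/
def klDiv {α : Type*} [Fintype α] (p q : α → ℝ) : ℝ :=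
  ∑ a, p a * Real.logb 2 (p a / q a)

/-- Shannon entropy (base 2) of a pmf. -/
def Hpmf {α : Type*} [Fintype α] (p : α → ℝ) : ℝ :=
  -∑ a, p a * Real.logb 2 (p a)

/-- Shannon entropy of a (finitely valued) random variable `f` under pmf `p`. -/
def entropy {Ω β : Type*} [Fintype Ω] [Fintype β] [DecidableEq β]
    (p : Ω → ℝ) (f : Ω → β) : ℝ := Hpmf (distOf p f)

/-- Conditional entropy `H(f | g)`. -/
def condEntropy {Ω β γ : Type*} [Fintype Ω] [Fintype β] [Fintype γ]
    [DecidableEq β] [DecidableEq γ] (p : Ω → ℝ) (f : Ω → β) (g : Ω → γ) : ℝ :=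
  entropy p (fun ω => (f ω, g ω)) - entropy p g

/-- Mutual information `I(f ; g)`. -/
def mutualInfo {Ω β γ : Type*} [Fintype Ω] [Fintype β] [Fintype γ]
    [DecidableEq β] [DecidableEq γ] (p : Ω → ℝ) (f : Ω → β) (g : Ω → γ) : ℝ :=
  entropy p f + entropy p g - entropy p (fun ω => (f ω, g ω))

/-- Conditional mutual information `I(f ; g | z)`. -/
def condMutualInfo {Ω β γ δ : Type*} [Fintype Ω] [Fintype β] [Fintype γ] [Fintype δ]
    [DecidableEq β] [DecidableEq γ] [DecidableEq δ]
    (p : Ω → ℝ) (f : Ω → β) (g : Ω → γ) (z : Ω → δ) : ℝ :=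
  entropy p (fun ω => (f ω, z ω)) + entropy p (fun ω => (g ω, z ω))
    - entropy p (fun ω => (f ω, g ω, z ω)) - entropy p z

/-- Conditional independence of `f` and `g` given `z` under the pmf `p`. -/
def CondIndep {Ω β γ δ : Type*} [Fintype Ω] [Fintype β] [Fintype γ] [Fintype δ]
    [DecidableEq β] [DecidableEq γ] [DecidableEq δ]
    (p : Ω → ℝ) (f : Ω → β) (g : Ω → γ) (z : Ω → δ) : Prop :=
  ∀ b c d, distOf p (fun ω => ((f ω, g ω), z ω)) ((b, c), d) * distOf p z d
    = distOf p (fun ω => (f ω, z ω)) (b, d) * distOf p (fun ω => (g ω, z ω)) (c, d)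

/-- Conditional distribution of `f` given `g` under `p` (uniform fallback on null events). -/
def condDist {Ω α β : Type*} [Fintype Ω] [Fintype α] [DecidableEq α] [DecidableEq β]
    (p : Ω → ℝ) (f : Ω → α) (g : Ω → β) : α → β → ℝ :=
  fun a b =>
    if distOf p g b = 0 then (Fintype.card α : ℝ)⁻¹
    else distOf p (fun ω => (f ω, g ω)) (a, b) / distOf p g b

/-- Size of an index set of rate `R` and blocklength `n`, i.e. `⟦1, 2^{nR}⟧`. -/
def codeSize (n : ℕ) (R : ℝ) : ℕ := max 1 ⌊(2 : ℝ) ^ ((n : ℝ) * R)⌋₊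

lemma codeSize_pos (n : ℕ) (R : ℝ) : 0 < codeSize n R :=
  lt_of_lt_of_le one_pos (le_max_left _ _)




section Helpers

lemma distOf_nonneg {α β : Type*} [Fintype α] [DecidableEq β] {p : α → ℝ}
    (hp : ∀ a, 0 ≤ p a) (f : α → β) (b : β) : 0 ≤ distOf p f b :=
  Finset.sum_nonneg fun a _ => by split <;> simp [hp a]

lemma sum_distOf {α β : Type*} [Fintype α] [Fintype β] [DecidableEq β] (p : α → ℝ)
    (f : α → β) : ∑ b, distOf p f b = ∑ a, p a := by
  unfold distOf
  rw [Finset.sum_comm]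
  exact Finset.sum_congr rfl fun a _ => by simp [Finset.sum_ite_eq]

lemma distOf_marg_snd_sum {Ω β γ : Type*} [Fintype Ω] [DecidableEq β] [DecidableEq γ]
    [Fintype γ] (p : Ω → ℝ) (f : Ω → β) (g : Ω → γ) (b : β) :
    ∑ c, distOf p (fun ω => (f ω, g ω)) (b, c) = distOf p f b := by
  unfold distOf
  rw [Finset.sum_comm]
  refine Finset.sum_congr rfl fun ω _ => ?_
  by_cases h : f ω = b <;> simp [Prod.ext_iff, h, Finset.sum_ite_eq]

lemma distOf_marg_fst_sum {Ω β γ : Type*} [Fintype Ω] [DecidableEq β] [DecidableEq γ]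
    [Fintype β] (p : Ω → ℝ) (f : Ω → β) (g : Ω → γ) (c : γ) :
    ∑ b, distOf p (fun ω => (f ω, g ω)) (b, c) = distOf p g c := by
  unfold distOf
  rw [Finset.sum_comm]
  refine Finset.sum_congr rfl fun ω _ => ?_
  by_cases h : g ω = c <;> simp [Prod.ext_iff, h, Finset.sum_ite_eq]

lemma distOf_congr {α β γ : Type*} [Fintype α] [DecidableEq β] [DecidableEq γ]
    (p : α → ℝ) (F : α → β) (G : α → γ) (x : β) (y : γ)
    (h : ∀ a, F a = x ↔ G a = y) : distOf p F x = distOf p G y :=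
  Finset.sum_congr rfl fun a _ => if_congr (h a) rfl rfl

lemma Hpmf_mul {β γ : Type*} [Fintype β] [Fintype γ]
    (u : β → ℝ) (w : γ → ℝ) (hu : ∑ b, u b = 1) (hw : ∑ c, w c = 1) :
    Hpmf (fun x : β × γ => u x.1 * w x.2) = Hpmf u + Hpmf w := by
  unfold Hpmf
  rw [← neg_add]
  congr 1
  rw [Fintype.sum_prod_type]
  have key : ∀ (b : β) (c : γ), u b * w c * Real.logb 2 (u b * w c)
      = u b * w c * Real.logb 2 (u b) + u b * w c * Real.logb 2 (w c) := by
    intro b c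
    by_cases hb : u b = 0
    · simp [hb]
    by_cases hc : w c = 0
    · simp [hc]
    rw [Real.logb_mul hb hc]; ring
  have e1 : ∀ b : β, ∑ c, u b * w c * Real.logb 2 (u b) = u b * Real.logb 2 (u b) := by
    intro b
    have : ∑ c, u b * w c * Real.logb 2 (u b)
        = (u b * Real.logb 2 (u b)) * ∑ c, w c := by
      rw [Finset.mul_sum]; exact Finset.sum_congr rfl fun c _ => by ring
    rw [this, hw, mul_one]
  have e2 : ∑ b, ∑ c, u b * w c * Real.logb 2 (w c) = ∑ c, w c * Real.logb 2 (w c) := by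
    rw [Finset.sum_comm]
    refine Finset.sum_congr rfl fun c _ => ?_
    have : ∑ b, u b * w c * Real.logb 2 (w c)
        = (w c * Real.logb 2 (w c)) * ∑ b, u b := by
      rw [Finset.mul_sum]; exact Finset.sum_congr rfl fun b _ => by ring
    rw [this, hu, mul_one]
  calc ∑ b, ∑ c, u b * w c * Real.logb 2 (u b * w c)
      = ∑ b, ∑ c, (u b * w c * Real.logb 2 (u b) + u b * w c * Real.logb 2 (w c)) :=
        Finset.sum_congr rfl fun b _ => Finset.sum_congr rfl fun c _ => key b c
    _ = (∑ b, ∑ c, u b * w c * Real.logb 2 (u b))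
        + ∑ b, ∑ c, u b * w c * Real.logb 2 (w c) := by
        simp [Finset.sum_add_distrib]
    _ = (∑ b, u b * Real.logb 2 (u b)) + ∑ c, w c * Real.logb 2 (w c) := by
        rw [e2]; congr 1; exact Finset.sum_congr rfl fun b _ => e1 b

end Helpers

/-- If the joint pmf of `(V_1, V_2)` has full support, `A` is
conditionally independent of `V_2` given `V_1`, and `A` is conditionally independent of
`V_1` given `V_2`, then `A` is independent of the pair `(V_1, V_2)`, i.e.
`I(V_1, V_2 ; A) = 0`. -/
theorem statement_13 {Ω 𝒱₁ 𝒱₂ 𝒜 : Type}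
    [Fintype Ω] [Fintype 𝒱₁] [Fintype 𝒱₂] [Fintype 𝒜]
    [DecidableEq 𝒱₁] [DecidableEq 𝒱₂] [DecidableEq 𝒜]
    (p : Ω → ℝ) (hp : IsPMF p)
    (V₁ : Ω → 𝒱₁) (V₂ : Ω → 𝒱₂) (A : Ω → 𝒜)
    (hfull : ∀ v : 𝒱₁ × 𝒱₂, 0 < distOf p (fun ω => (V₁ ω, V₂ ω)) v)
    (h1 : CondIndep p A V₂ V₁)
    (h2 : CondIndep p A V₁ V₂) :
    mutualInfo p (fun ω => (V₁ ω, V₂ ω)) A = 0 := by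
  obtain ⟨hp0, hp1⟩ := hp
  -- basic sums
  have hsumPV : ∑ v : 𝒱₁ × 𝒱₂, distOf p (fun ω => (V₁ ω, V₂ ω)) v = 1 := by
    rw [sum_distOf, hp1]
  have hsumPA : ∑ a : 𝒜, distOf p A a = 1 := by rw [sum_distOf, hp1]
  have hsumP1 : ∑ v1 : 𝒱₁, distOf p V₁ v1 = 1 := by rw [sum_distOf, hp1]
  -- nonemptiness
  have hne : Nonempty (𝒱₁ × 𝒱₂) := by
    by_contra h
    rw [not_nonempty_iff] at h
    rw [Finset.univ_eq_empty, Finset.sum_empty] at hsumPV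
    norm_num at hsumPV
  obtain ⟨v0⟩ := hne
  haveI hne1 : Nonempty 𝒱₁ := ⟨v0.1⟩
  haveI hne2 : Nonempty 𝒱₂ := ⟨v0.2⟩
  -- positivity of marginals
  have hP1pos : ∀ v1, 0 < distOf p V₁ v1 := fun v1 => by
    rw [← distOf_marg_snd_sum p V₁ V₂ v1]
    exact Finset.sum_pos (fun v2 _ => hfull (v1, v2)) Finset.univ_nonempty
  have hP2pos : ∀ v2, 0 < distOf p V₂ v2 := fun v2 => by
    rw [← distOf_marg_fst_sum p V₁ V₂ v2]
    exact Finset.sum_pos (fun v1 _ => hfull (v1, v2)) Finset.univ_nonempty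
  -- rewrite the conditional independences
  have key1 : ∀ (a : 𝒜) (v1 : 𝒱₁) (v2 : 𝒱₂),
      distOf p (fun ω => ((V₁ ω, V₂ ω), A ω)) ((v1, v2), a) * distOf p V₁ v1
      = distOf p (fun ω => (A ω, V₁ ω)) (a, v1)
        * distOf p (fun ω => (V₁ ω, V₂ ω)) (v1, v2) := by
    intro a v1 v2
    have h := h1 a v2 v1
    have e1 : distOf p (fun ω => ((A ω, V₂ ω), V₁ ω)) ((a, v2), v1)
        = distOf p (fun ω => ((V₁ ω, V₂ ω), A ω)) ((v1, v2), a) :=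
      distOf_congr p _ _ _ _ fun ω => by simp [Prod.ext_iff]; tauto
    have e2 : distOf p (fun ω => (V₂ ω, V₁ ω)) (v2, v1)
        = distOf p (fun ω => (V₁ ω, V₂ ω)) (v1, v2) :=
      distOf_congr p _ _ _ _ fun ω => by simp [Prod.ext_iff]; tauto
    rw [e1, e2] at h
    exact h
  have key2 : ∀ (a : 𝒜) (v1 : 𝒱₁) (v2 : 𝒱₂),
      distOf p (fun ω => ((V₁ ω, V₂ ω), A ω)) ((v1, v2), a) * distOf p V₂ v2
      = distOf p (fun ω => (A ω, V₂ ω)) (a, v2)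
        * distOf p (fun ω => (V₁ ω, V₂ ω)) (v1, v2) := by
    intro a v1 v2
    have h := h2 a v1 v2
    have e1 : distOf p (fun ω => ((A ω, V₁ ω), V₂ ω)) ((a, v1), v2)
        = distOf p (fun ω => ((V₁ ω, V₂ ω), A ω)) ((v1, v2), a) :=
      distOf_congr p _ _ _ _ fun ω => by simp [Prod.ext_iff]; tauto
    have e2 : distOf p (fun ω => (V₁ ω, V₂ ω)) (v1, v2)
        = distOf p (fun ω => (V₁ ω, V₂ ω)) (v1, v2) := rfl
    rw [e1] at h
    exact h
  -- conditional pmfs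
  set g1 : 𝒜 → 𝒱₁ → ℝ :=
    fun a v1 => distOf p (fun ω => (A ω, V₁ ω)) (a, v1) / distOf p V₁ v1 with hg1
  set g2 : 𝒜 → 𝒱₂ → ℝ :=
    fun a v2 => distOf p (fun ω => (A ω, V₂ ω)) (a, v2) / distOf p V₂ v2 with hg2
  have hPJ1 : ∀ a v1 v2, distOf p (fun ω => ((V₁ ω, V₂ ω), A ω)) ((v1, v2), a)
      = g1 a v1 * distOf p (fun ω => (V₁ ω, V₂ ω)) (v1, v2) := by
    intro a v1 v2
    have h := key1 a v1 v2
    have hpos := hP1pos v1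
    simp only [hg1]
    rw [div_mul_eq_mul_div, eq_div_iff hpos.ne']
    linarith [h]
  have hPJ2 : ∀ a v1 v2, distOf p (fun ω => ((V₁ ω, V₂ ω), A ω)) ((v1, v2), a)
      = g2 a v2 * distOf p (fun ω => (V₁ ω, V₂ ω)) (v1, v2) := by
    intro a v1 v2
    have h := key2 a v1 v2
    have hpos := hP2pos v2
    simp only [hg2]
    rw [div_mul_eq_mul_div, eq_div_iff hpos.ne']
    linarith [h]
  have hgg : ∀ a v1 v2, g1 a v1 = g2 a v2 := by
    intro a v1 v2
    have h := (hPJ1 a v1 v2).symm.trans (hPJ2 a v1 v2)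
    exact mul_right_cancel₀ (ne_of_gt (hfull (v1, v2))) h
  have hconst : ∀ a v1, g1 a v1 = g1 a v0.1 := fun a v1 =>
    (hgg a v1 v0.2).trans (hgg a v0.1 v0.2).symm
  -- g1 a v0.1 = P(A = a)
  have hPAg : ∀ a, distOf p A a = g1 a v0.1 := by
    intro a
    have hm : ∑ v1, distOf p (fun ω => (A ω, V₁ ω)) (a, v1) = distOf p A a :=
      distOf_marg_snd_sum p A V₁ a
    have hterm : ∀ v1, distOf p (fun ω => (A ω, V₁ ω)) (a, v1)
        = g1 a v0.1 * distOf p V₁ v1 := by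
      intro v1
      rw [← hconst a v1, hg1]
      field_simp
      rw [mul_div_assoc, div_self (ne_of_gt (hP1pos v1)), mul_one]
    rw [← hm]
    calc ∑ v1, distOf p (fun ω => (A ω, V₁ ω)) (a, v1)
        = ∑ v1, g1 a v0.1 * distOf p V₁ v1 :=
          Finset.sum_congr rfl fun v1 _ => hterm v1
      _ = g1 a v0.1 * ∑ v1, distOf p V₁ v1 := by rw [Finset.mul_sum]
      _ = g1 a v0.1 := by rw [hsumP1, mul_one]
  -- factorization
  have hfact : distOf p (fun ω => ((V₁ ω, V₂ ω), A ω))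
      = fun x : (𝒱₁ × 𝒱₂) × 𝒜 =>
          distOf p (fun ω => (V₁ ω, V₂ ω)) x.1 * distOf p A x.2 := by
    funext x
    obtain ⟨⟨v1, v2⟩, a⟩ := x
    rw [hPJ1 a v1 v2, hPAg a, hconst a v1]
    ring
  -- conclude
  simp only [mutualInfo, entropy]
  rw [hfact, Hpmf_mul _ _ hsumPV hsumPA]
  ring



end SC
end
end

section
/- Let (A_{1,2}, A_{1,3}, A_{2,3}, X_1, X_2, X_3) be finitely valued random variables whose joint pmf factorizes as Q_{A_{1,2} A_{1,3} A_{2,3}} · Q_{X_1 | A_{1,2} A_{1,3}} · Q_{X_2 | A_{1,2} A_{1,3} A_{2,3}} · Q_{X_3 | A_{1,3} A_{2,3}}, where A_{1,2} is conditionally independent of A_{2,3} given A_{1,3}. Then I(X_1 ; X_3 | A_{1,3}) = 0, i.e., X_1 and X_3 are conditionally independent given A_{1,3}. -/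
open scoped BigOperators

noncomputable section

namespace SC

section IteSums
variable {γ : Type*} [Fintype γ] [DecidableEq γ]

lemma sum_ite_mid (P Q : Prop) [Decidable P] [Decidable Q] (x : γ) (E : γ → ℝ) :
    ∑ y, (if P ∧ y = x ∧ Q then E y else 0) = if P ∧ Q then E x else 0 := by
  by_cases hP : P <;> by_cases hQ : Q <;> simp [hP, hQ]

lemma sum_ite_left (Q : Prop) [Decidable Q] (x : γ) (E : γ → ℝ) :
    ∑ y, (if y = x ∧ Q then E y else 0) = if Q then E x else 0 := by
  by_cases hQ : Q <;> simp [hQ]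

lemma sum_ite_right (P : Prop) [Decidable P] (x : γ) (E : γ → ℝ) :
    ∑ y, (if P ∧ y = x then E y else 0) = if P then E x else 0 := by
  by_cases hP : P <;> simp [hP]

lemma sum_ite_const (Q : Prop) [Decidable Q] (E : γ → ℝ) :
    ∑ y, (if Q then E y else 0) = if Q then ∑ y, E y else 0 := by
  by_cases hQ : Q <;> simp [hQ]

lemma sum_mul_pmf_mul (w : γ → ℝ) (hw : ∑ y, w y = 1) (A B : ℝ) :
    ∑ y, A * w y * B = A * B := by
  rw [← Finset.sum_mul, ← Finset.mul_sum, hw, mul_one]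

lemma sum_mul_pmf (w : γ → ℝ) (hw : ∑ y, w y = 1) (A : ℝ) :
    ∑ y, A * w y = A := by
  rw [← Finset.mul_sum, hw, mul_one]

end IteSums

/-- If `f` and `g` are conditionally independent given `z`, then `I(f;g|z) = 0`. -/
lemma condMutualInfo_eq_zero_of_condIndep {Ω β γ δ : Type*}
    [Fintype Ω] [Fintype β] [Fintype γ] [Fintype δ]
    [DecidableEq β] [DecidableEq γ] [DecidableEq δ]
    (p : Ω → ℝ) (hp : ∀ ω, 0 ≤ p ω) (f : Ω → β) (g : Ω → γ) (z : Ω → δ)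
    (h : CondIndep p f g z) : condMutualInfo p f g z = 0 := by
  classical
  set L : ℝ → ℝ := Real.logb 2 with hL
  set F : β → γ → δ → ℝ := fun b c d =>
    distOf p (fun ω => ((f ω, g ω), z ω)) ((b, c), d) with hF
  have hFnn : ∀ b c d, 0 ≤ F b c d := fun b c d => distOf_nonneg hp _ _
  -- marginals
  have hs : ∀ b d, distOf p (fun ω => (f ω, z ω)) (b, d) = ∑ c, F b c d := by
    intro b d
    simp only [hF, distOf]
    rw [Finset.sum_comm]
    refine Finset.sum_congr rfl fun a _ => ?_
    by_cases h1 : f a = b <;> by_cases h2 : z a = d <;>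
      simp [Prod.ext_iff, h1, h2]
  have hu : ∀ c d, distOf p (fun ω => (g ω, z ω)) (c, d) = ∑ b, F b c d := by
    intro c d
    simp only [hF, distOf]
    rw [Finset.sum_comm]
    refine Finset.sum_congr rfl fun a _ => ?_
    by_cases h1 : g a = c <;> by_cases h2 : z a = d <;>
      simp [Prod.ext_iff, h1, h2]
  have ht : ∀ d, distOf p z d = ∑ b, ∑ c, F b c d := by
    intro d
    have : distOf p z d = ∑ b, distOf p (fun ω => (f ω, z ω)) (b, d) := by
      simp only [distOf]
      rw [Finset.sum_comm]
      refine Finset.sum_congr rfl fun a _ => ?_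
      by_cases h2 : z a = d <;> simp [Prod.ext_iff, h2]
    rw [this]
    exact Finset.sum_congr rfl fun b _ => hs b d
  have hE : ∀ b c d, distOf p (fun ω => (f ω, g ω, z ω)) (b, (c, d)) = F b c d := by
    intro b c d
    simp only [hF, distOf]
    refine Finset.sum_congr rfl fun a _ => ?_
    simp [Prod.ext_iff, and_assoc]
  -- pointwise key identity
  have key : ∀ b c d,
      F b c d * L (F b c d) + F b c d * L (∑ b', ∑ c', F b' c' d)
        - F b c d * L (∑ c', F b c' d) - F b c d * L (∑ b', F b' c d) = 0 := by
    intro b c d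
    rcases eq_or_lt_of_le (hFnn b c d) with h0 | hpos
    · rw [← h0]; ring
    · have hS : 0 < ∑ c', F b c' d :=
        lt_of_lt_of_le hpos (Finset.single_le_sum (fun c' _ => hFnn b c' d)
          (Finset.mem_univ c))
      have hU : 0 < ∑ b', F b' c d :=
        lt_of_lt_of_le hpos (Finset.single_le_sum (fun b' _ => hFnn b' c d)
          (Finset.mem_univ b))
      have hT : 0 < ∑ b', ∑ c', F b' c' d :=
        lt_of_lt_of_le hS (Finset.single_le_sum
          (fun b' _ => Finset.sum_nonneg fun c' _ => hFnn b' c' d) (Finset.mem_univ b))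
      have hmul : F b c d * (∑ b', ∑ c', F b' c' d)
          = (∑ c', F b c' d) * (∑ b', F b' c d) := by
        rw [← hs b d, ← hu c d, ← ht d]
        exact h b c d
      have hlog : L (F b c d) + L (∑ b', ∑ c', F b' c' d)
          = L (∑ c', F b c' d) + L (∑ b', F b' c d) := by
        rw [hL]
        rw [← Real.logb_mul hpos.ne' hT.ne', hmul, Real.logb_mul hS.ne' hU.ne']
      linear_combination (F b c d) * hlog
  -- entropies as triple sums
  have e1 : entropy p (fun ω => (f ω, z ω))
      = -∑ b, ∑ d, ∑ c, F b c d * L (∑ c', F b c' d) := by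
    simp only [entropy, Hpmf, Fintype.sum_prod_type, hL]
    congr 1
    refine Finset.sum_congr rfl fun b _ => Finset.sum_congr rfl fun d _ => ?_
    rw [hs b d, Finset.sum_mul]
  have e2 : entropy p (fun ω => (g ω, z ω))
      = -∑ c, ∑ d, ∑ b, F b c d * L (∑ b', F b' c d) := by
    simp only [entropy, Hpmf, Fintype.sum_prod_type, hL]
    congr 1
    refine Finset.sum_congr rfl fun c _ => Finset.sum_congr rfl fun d _ => ?_
    rw [hu c d, Finset.sum_mul]
  have e3 : entropy p (fun ω => (f ω, g ω, z ω))
      = -∑ b, ∑ c, ∑ d, F b c d * L (F b c d) := by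
    simp only [entropy, Hpmf, Fintype.sum_prod_type, hL]
    congr 1
    refine Finset.sum_congr rfl fun b _ => Finset.sum_congr rfl fun c _ =>
      Finset.sum_congr rfl fun d _ => ?_
    rw [hE b c d]
  have e4 : entropy p z
      = -∑ d, ∑ b, ∑ c, F b c d * L (∑ b', ∑ c', F b' c' d) := by
    simp only [entropy, Hpmf, hL]
    congr 1
    refine Finset.sum_congr rfl fun d _ => ?_
    rw [ht d, Finset.sum_mul]
    refine Finset.sum_congr rfl fun b _ => ?_
    rw [Finset.sum_mul]
  -- reorder sums
  have comm1 : ∑ b, ∑ d, ∑ c, F b c d * L (∑ c', F b c' d)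
      = ∑ d, ∑ b, ∑ c, F b c d * L (∑ c', F b c' d) := Finset.sum_comm
  have comm2 : ∑ c, ∑ d, ∑ b, F b c d * L (∑ b', F b' c d)
      = ∑ d, ∑ b, ∑ c, F b c d * L (∑ b', F b' c d) :=
    Finset.sum_comm.trans (Finset.sum_congr rfl fun d _ => Finset.sum_comm)
  have comm3 : ∑ b, ∑ c, ∑ d, F b c d * L (F b c d)
      = ∑ d, ∑ b, ∑ c, F b c d * L (F b c d) :=
    (Finset.sum_congr rfl fun b _ => Finset.sum_comm).trans Finset.sum_comm
  have hzero : (∑ d, ∑ b, ∑ c, F b c d * L (F b c d))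
      + (∑ d, ∑ b, ∑ c, F b c d * L (∑ b', ∑ c', F b' c' d))
      - (∑ d, ∑ b, ∑ c, F b c d * L (∑ c', F b c' d))
      - (∑ d, ∑ b, ∑ c, F b c d * L (∑ b', F b' c d)) = 0 := by
    rw [← Finset.sum_add_distrib, ← Finset.sum_sub_distrib, ← Finset.sum_sub_distrib]
    refine Finset.sum_eq_zero fun d _ => ?_
    rw [← Finset.sum_add_distrib, ← Finset.sum_sub_distrib, ← Finset.sum_sub_distrib]
    refine Finset.sum_eq_zero fun b _ => ?_
    rw [← Finset.sum_add_distrib, ← Finset.sum_sub_distrib, ← Finset.sum_sub_distrib]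
    refine Finset.sum_eq_zero fun c _ => ?_
    exact key b c d
  rw [condMutualInfo, e1, e2, e3, e4, comm1, comm2, comm3]
  linarith [hzero]




/-- If the joint pmf of `(A_{1,2}, A_{1,3}, A_{2,3}, X_1, X_2, X_3)`
factorizes as `Q_{A} · Q_{X_1|A_{1,2}A_{1,3}} · Q_{X_2|A_{1,2}A_{1,3}A_{2,3}} ·
Q_{X_3|A_{1,3}A_{2,3}}` with `A_{1,2} ⊥ A_{2,3} | A_{1,3}`, then
`I(X_1 ; X_3 | A_{1,3}) = 0`. -/
theorem statement_14 {𝒜₁₂ 𝒜₁₃ 𝒜₂₃ 𝒳₁ 𝒳₂ 𝒳₃ : Type}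
    [Fintype 𝒜₁₂] [Fintype 𝒜₁₃] [Fintype 𝒜₂₃] [Fintype 𝒳₁] [Fintype 𝒳₂] [Fintype 𝒳₃]
    [DecidableEq 𝒜₁₂] [DecidableEq 𝒜₁₃] [DecidableEq 𝒜₂₃]
    [DecidableEq 𝒳₁] [DecidableEq 𝒳₂] [DecidableEq 𝒳₃]
    (p : (𝒜₁₂ × 𝒜₁₃ × 𝒜₂₃) × 𝒳₁ × 𝒳₂ × 𝒳₃ → ℝ) (hp : IsPMF p)
    (qA : 𝒜₁₂ × 𝒜₁₃ × 𝒜₂₃ → ℝ)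
    (q1 : 𝒳₁ → 𝒜₁₂ × 𝒜₁₃ → ℝ)
    (q2 : 𝒳₂ → 𝒜₁₂ × 𝒜₁₃ × 𝒜₂₃ → ℝ)
    (q3 : 𝒳₃ → 𝒜₁₃ × 𝒜₂₃ → ℝ)
    (hqA : IsPMF qA)
    (hq1 : ∀ a, IsPMF fun x => q1 x a)
    (hq2 : ∀ a, IsPMF fun x => q2 x a)
    (hq3 : ∀ a, IsPMF fun x => q3 x a)
    (hfact : ∀ ω : (𝒜₁₂ × 𝒜₁₃ × 𝒜₂₃) × 𝒳₁ × 𝒳₂ × 𝒳₃,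
      p ω = qA ω.1 * q1 ω.2.1 (ω.1.1, ω.1.2.1) * q2 ω.2.2.1 ω.1 *
        q3 ω.2.2.2 (ω.1.2.1, ω.1.2.2))
    (hci : CondIndep p (fun ω => ω.1.1) (fun ω => ω.1.2.2) (fun ω => ω.1.2.1)) :
    condMutualInfo p (fun ω => ω.2.1) (fun ω => ω.2.2.2) (fun ω => ω.1.2.1) = 0 := by
  refine condMutualInfo_eq_zero_of_condIndep p hp.1 _ _ _ ?_
  intro x1 x3 a13
  show distOf p (fun ω => ((ω.2.1, ω.2.2.2), ω.1.2.1)) ((x1, x3), a13)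
      * distOf p (fun ω => ω.1.2.1) a13
      = distOf p (fun ω => (ω.2.1, ω.1.2.1)) (x1, a13)
        * distOf p (fun ω => (ω.2.2.2, ω.1.2.1)) (x3, a13)
  have w1 : ∀ (a : 𝒜₁₂ × 𝒜₁₃) (A B : ℝ), (∑ y, A * q1 y a * B) = A * B :=
    fun a A B => sum_mul_pmf_mul _ (hq1 a).2 A B
  have w1' : ∀ (a : 𝒜₁₂ × 𝒜₁₃) (A : ℝ), (∑ y, A * q1 y a) = A :=
    fun a A => sum_mul_pmf _ (hq1 a).2 A
  have w2 : ∀ (a : 𝒜₁₂ × 𝒜₁₃ × 𝒜₂₃) (A B : ℝ), (∑ y, A * q2 y a * B) = A * B :=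
    fun a A B => sum_mul_pmf_mul _ (hq2 a).2 A B
  have w2' : ∀ (a : 𝒜₁₂ × 𝒜₁₃ × 𝒜₂₃) (A : ℝ), (∑ y, A * q2 y a) = A :=
    fun a A => sum_mul_pmf _ (hq2 a).2 A
  have w3 : ∀ (a : 𝒜₁₃ × 𝒜₂₃) (A B : ℝ), (∑ y, A * q3 y a * B) = A * B :=
    fun a A B => sum_mul_pmf_mul _ (hq3 a).2 A B
  have w3' : ∀ (a : 𝒜₁₃ × 𝒜₂₃) (A : ℝ), (∑ y, A * q3 y a) = A :=
    fun a A => sum_mul_pmf _ (hq3 a).2 A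
  have hD : distOf p (fun ω => ((ω.2.1, ω.2.2.2), ω.1.2.1)) ((x1, x3), a13)
      = ∑ a12, ∑ a23, qA (a12, a13, a23) * q1 x1 (a12, a13) * q3 x3 (a13, a23) := by
    simp only [distOf, hfact, Fintype.sum_prod_type, Prod.mk.injEq, and_assoc,
      sum_ite_mid, sum_ite_left, sum_ite_right, sum_ite_const,
      w1, w1', w2, w2', w3, w3', Finset.sum_ite_eq', Finset.mem_univ, if_true]
    try dsimp only
    try simp only [sum_ite_mid, sum_ite_left, sum_ite_right, sum_ite_const,
      w1, w1', w2, w2', w3, w3', Finset.sum_ite_eq', Finset.mem_univ, if_true]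
  have hz : distOf p (fun ω => ω.1.2.1) a13
      = ∑ a12, ∑ a23, qA (a12, a13, a23) := by
    simp only [distOf, hfact, Fintype.sum_prod_type, Prod.mk.injEq, and_assoc,
      sum_ite_mid, sum_ite_left, sum_ite_right, sum_ite_const,
      w1, w1', w2, w2', w3, w3', Finset.sum_ite_eq', Finset.mem_univ, if_true]
    try dsimp only
    try simp only [sum_ite_mid, sum_ite_left, sum_ite_right, sum_ite_const,
      w1, w1', w2, w2', w3, w3', Finset.sum_ite_eq', Finset.mem_univ, if_true]
    rw [Finset.sum_congr rfl fun x _ => Finset.sum_comm]; simp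
  have hfz : distOf p (fun ω => (ω.2.1, ω.1.2.1)) (x1, a13)
      = ∑ a12, ∑ a23, qA (a12, a13, a23) * q1 x1 (a12, a13) := by
    simp only [distOf, hfact, Fintype.sum_prod_type, Prod.mk.injEq, and_assoc,
      sum_ite_mid, sum_ite_left, sum_ite_right, sum_ite_const,
      w1, w1', w2, w2', w3, w3', Finset.sum_ite_eq', Finset.mem_univ, if_true]
    try dsimp only
    try simp only [sum_ite_mid, sum_ite_left, sum_ite_right, sum_ite_const,
      w1, w1', w2, w2', w3, w3', Finset.sum_ite_eq', Finset.mem_univ, if_true]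
  have hgz : distOf p (fun ω => (ω.2.2.2, ω.1.2.1)) (x3, a13)
      = ∑ a12, ∑ a23, qA (a12, a13, a23) * q3 x3 (a13, a23) := by
    simp only [distOf, hfact, Fintype.sum_prod_type, Prod.mk.injEq, and_assoc,
      sum_ite_mid, sum_ite_left, sum_ite_right, sum_ite_const,
      w1, w1', w2, w2', w3, w3', Finset.sum_ite_eq', Finset.mem_univ, if_true]
    try dsimp only
    try simp only [sum_ite_mid, sum_ite_left, sum_ite_right, sum_ite_const,
      w1, w1', w2, w2', w3, w3', Finset.sum_ite_eq', Finset.mem_univ, if_true]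
  -- pointwise conditional independence of the A-variables
  have hciQ : ∀ a12 a23, qA (a12, a13, a23) * (∑ b12, ∑ b23, qA (b12, a13, b23))
      = (∑ b23, qA (a12, a13, b23)) * (∑ b12, qA (b12, a13, a23)) := by
    intro a12 a23
    have h' := hci a12 a23 a13
    have hE1 : distOf p (fun ω => ((ω.1.1, ω.1.2.2), ω.1.2.1)) ((a12, a23), a13)
        = qA (a12, a13, a23) := by
      simp only [distOf, hfact, Fintype.sum_prod_type, Prod.mk.injEq, and_assoc,
        sum_ite_mid, sum_ite_left, sum_ite_right, sum_ite_const,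
        w1, w1', w2, w2', w3, w3', Finset.sum_ite_eq', Finset.mem_univ, if_true]
      try dsimp only
      try simp only [sum_ite_mid, sum_ite_left, sum_ite_right, sum_ite_const,
        w1, w1', w2, w2', w3, w3', Finset.sum_ite_eq', Finset.mem_univ, if_true]
      simp [ite_and, Finset.sum_ite_irrel]
    have hE2 : distOf p (fun ω => (ω.1.1, ω.1.2.1)) (a12, a13)
        = ∑ b23, qA (a12, a13, b23) := by
      simp only [distOf, hfact, Fintype.sum_prod_type, Prod.mk.injEq, and_assoc,
        sum_ite_mid, sum_ite_left, sum_ite_right, sum_ite_const,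
        w1, w1', w2, w2', w3, w3', Finset.sum_ite_eq', Finset.mem_univ, if_true]
      try dsimp only
      try simp only [sum_ite_mid, sum_ite_left, sum_ite_right, sum_ite_const,
        w1, w1', w2, w2', w3, w3', Finset.sum_ite_eq', Finset.mem_univ, if_true]
      rw [Finset.sum_eq_single a12 (by intro b _ hb; simp [hb]) (by simp),
        Finset.sum_eq_single a13 (by intro b _ hb; simp [hb]) (by simp)]
      simp
    have hE3 : distOf p (fun ω => (ω.1.2.2, ω.1.2.1)) (a23, a13)
        = ∑ b12, qA (b12, a13, a23) := by
      simp only [distOf, hfact, Fintype.sum_prod_type, Prod.mk.injEq, and_assoc,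
        sum_ite_mid, sum_ite_left, sum_ite_right, sum_ite_const,
        w1, w1', w2, w2', w3, w3', Finset.sum_ite_eq', Finset.mem_univ, if_true]
      try dsimp only
      try simp only [sum_ite_mid, sum_ite_left, sum_ite_right, sum_ite_const,
        w1, w1', w2, w2', w3, w3', Finset.sum_ite_eq', Finset.mem_univ, if_true]
      refine Finset.sum_congr rfl fun x _ => ?_
      rw [Finset.sum_eq_single a13 (by intro b _ hb; simp [hb]) (by simp)]
      simp
    rw [show distOf p (fun ω => (((fun ω => ω.1.1) ω, (fun ω => ω.1.2.2) ω),
          (fun ω => ω.1.2.1) ω)) ((a12, a23), a13)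
        = distOf p (fun ω => ((ω.1.1, ω.1.2.2), ω.1.2.1)) ((a12, a23), a13) from rfl,
      show distOf p (fun ω => ((fun ω => ω.1.1) ω, (fun ω => ω.1.2.1) ω)) (a12, a13)
        = distOf p (fun ω => (ω.1.1, ω.1.2.1)) (a12, a13) from rfl,
      show distOf p (fun ω => ((fun ω => ω.1.2.2) ω, (fun ω => ω.1.2.1) ω)) (a23, a13)
        = distOf p (fun ω => (ω.1.2.2, ω.1.2.1)) (a23, a13) from rfl,
      hE1, hE2, hE3, hz] at h'
    exact h'
  rw [hD, hz, hfz, hgz]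
  calc (∑ a12, ∑ a23, qA (a12, a13, a23) * q1 x1 (a12, a13) * q3 x3 (a13, a23)) *
        (∑ a12, ∑ a23, qA (a12, a13, a23))
      = ∑ a12, ∑ a23, (q1 x1 (a12, a13) * (∑ b23, qA (a12, a13, b23)))
          * (q3 x3 (a13, a23) * (∑ b12, qA (b12, a13, a23))) := by
        rw [Finset.sum_mul]
        refine Finset.sum_congr rfl fun a12 _ => ?_
        rw [Finset.sum_mul]
        refine Finset.sum_congr rfl fun a23 _ => ?_
        linear_combination (q1 x1 (a12, a13) * q3 x3 (a13, a23)) * hciQ a12 a23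
    _ = (∑ a12, q1 x1 (a12, a13) * (∑ b23, qA (a12, a13, b23)))
          * (∑ a23, q3 x3 (a13, a23) * (∑ b12, qA (b12, a13, a23))) := by
        rw [Finset.sum_mul]
        refine Finset.sum_congr rfl fun a12 _ => ?_
        rw [← Finset.mul_sum]
    _ = (∑ a12, ∑ a23, qA (a12, a13, a23) * q1 x1 (a12, a13)) *
          (∑ a12, ∑ a23, qA (a12, a13, a23) * q3 x3 (a13, a23)) := by
        congr 1
        · refine Finset.sum_congr rfl fun a12 _ => ?_
          rw [Finset.mul_sum]
          refine Finset.sum_congr rfl fun a23 _ => ?_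
          ring
        · rw [Finset.sum_comm]
          refine Finset.sum_congr rfl fun a23 _ => ?_
          rw [Finset.mul_sum]
          refine Finset.sum_congr rfl fun a12 _ => ?_
          ring

end SC
end
end
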